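/- The family AC(ℝ) of almost continuous functions (in the sense of Stallings) has property B(e_𝔠, 𝔠): there exists a set 𝓑 of ℝ-linear subspaces of ℝ^ℝ with #𝓑 ≥ 𝔠 such that every B ∈ 𝓑 satisfies B ⊆ AC(ℝ) ∪ {0} and dim_ℝ B ≥ e_𝔠, and AC(ℝ) ∪ {0} = ⋃ 𝓑. -/

import Mathlib

open Cardinal

/-- `f` is almost continuous in the sense of Stallings: every open subset of `ℝ²`
containing the graph of `f` contains the graph of some continuous function. -/
def IsAlmostContinuous (f : ℝ → ℝ) : Prop :=
  ∀ O : Set (ℝ × ℝ), IsOpen O → {p : ℝ × ℝ | p.2 = f p.1} ⊆ O →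
    ∃ g : ℝ → ℝ, Continuous g ∧ {p : ℝ × ℝ | p.2 = g p.1} ⊆ O

/-- The cardinal `e_𝔠`: the least cardinality of a family `F ⊆ ℝ^ℝ` such that every
`φ : ℝ → ℝ` agrees with some member of `F` on a set of cardinality `< 𝔠`. -/
noncomputable def eContinuum : Cardinal :=
  sInf {c : Cardinal | ∃ F : Set (ℝ → ℝ), #F = c ∧
    ∀ φ : ℝ → ℝ, ∃ f ∈ F, #{x : ℝ | f x = φ x} < Cardinal.continuum}

open Set

namespace ACPf


/-- A blocking set: a closed subset of the plane meeting the graph of every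
continuous function. -/
def Blocking (K : Set (ℝ × ℝ)) : Prop :=
  IsClosed K ∧ ∀ g : ℝ → ℝ, Continuous g → ∃ x, (x, g x) ∈ K

theorem isAlmostContinuous_of_meets {f : ℝ → ℝ}
    (h : ∀ K, Blocking K → ∃ x, (x, f x) ∈ K) : IsAlmostContinuous f := by
  intro O hO hgr
  by_contra hcon
  push_neg at hcon
  have hB : Blocking Oᶜ := by
    refine ⟨hO.isClosed_compl, fun g hg => ?_⟩
    have hns : ¬ {p : ℝ × ℝ | p.2 = g p.1} ⊆ O := hcon g hg
    rw [Set.not_subset] at hns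
    rcases hns with ⟨⟨x, y⟩, hp1, hp2⟩
    simp only [mem_setOf_eq] at hp1
    exact ⟨x, by simpa [hp1] using hp2⟩
  rcases h _ hB with ⟨x, hx⟩
  exact hx (hgr (by simp : ((x, f x) : ℝ × ℝ) ∈ {p : ℝ × ℝ | p.2 = f p.1}))

/-- Almost continuous functions are closed under multiplication by nonzero scalars. -/
theorem isAlmostContinuous_smul {f : ℝ → ℝ} (hf : IsAlmostContinuous f) (c : ℝ) : IsAlmostContinuous (c • f) := by
  intro O hO hgr
  have hcont : Continuous (fun p : ℝ × ℝ => ((p.1, c * p.2) : ℝ × ℝ)) := by fun_prop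
  have hO' : IsOpen ((fun p : ℝ × ℝ => ((p.1, c * p.2) : ℝ × ℝ)) ⁻¹' O) := hO.preimage hcont
  have hgr' : {p : ℝ × ℝ | p.2 = f p.1} ⊆ (fun p : ℝ × ℝ => ((p.1, c * p.2) : ℝ × ℝ)) ⁻¹' O := by
    rintro ⟨x, y⟩ hy
    simp only [mem_setOf_eq] at hy
    subst hy
    exact hgr rfl
  rcases hf _ hO' hgr' with ⟨g, hg, hgsub⟩
  refine ⟨c • g, hg.const_smul c, ?_⟩
  rintro ⟨x, y⟩ hy
  simp only [mem_setOf_eq] at hy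
  subst hy
  exact hgsub (show ((x, g x) : ℝ × ℝ) ∈ _ from rfl)



variable (K : Set (ℝ × ℝ))

/-- `SafeBox K x r a b`: over the interval `[x-r, x+r]`, the horizontal strip `[a,b]`
misses `K`. -/
def SafeBox (x r a b : ℝ) : Prop :=
  ∀ x' y : ℝ, |x' - x| ≤ r → a ≤ y → y ≤ b → (x', y) ∉ K

/-- The safety radius at `x` (capped at 1). -/
noncomputable def sRad (x : ℝ) : ℝ :=
  sSup {r : ℝ | 0 ≤ r ∧ r ≤ 1 ∧ ∃ a b : ℝ, a < b ∧ SafeBox K x r a b}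

variable {K}

/-- Safe boxes shrink Lipschitzly. -/
theorem safeBox_mono {x x' r a b : ℝ} (h : SafeBox K x r a b) :
    SafeBox K x' (r - |x' - x|) a b := by
  intro z y hz h1 h2
  refine h z y ?_ h1 h2
  calc |z - x| = |(z - x') + (x' - x)| := by ring_nf
  _ ≤ |z - x'| + |x' - x| := abs_add_le _ _
  _ ≤ r := by linarith

section Basic

variable (hK : IsClosed K) (hfib : ∀ x : ℝ, {y : ℝ | (x, y) ∈ K} ≠ Set.univ)

include hK hfib

/-- Basic safe box existence at every point. -/
theorem exists_safeBox (x : ℝ) : ∃ r a b : ℝ, 0 < r ∧ a < b ∧ SafeBox K x r a b := by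
  have h1 : {y : ℝ | (x, y) ∈ K} ≠ Set.univ := hfib x
  have h2 : ∃ y : ℝ, (x, y) ∉ K := by
    by_contra hcon
    push_neg at hcon
    exact h1 (eq_univ_of_forall hcon)
  rcases h2 with ⟨y, hy⟩
  have hUopen : IsOpen Kᶜ := isOpen_compl_iff.2 hK
  rcases Metric.isOpen_iff.1 hUopen (x, y) hy with ⟨ε, hε, hball⟩
  refine ⟨ε / 4, y - ε / 4, y + ε / 4, by linarith, by linarith, ?_⟩
  intro x' y' hx' hy1 hy2
  have : dist ((x', y') : ℝ × ℝ) (x, y) < ε := by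
    rw [Prod.dist_eq]
    have h1 : dist x' x ≤ ε / 4 := by rwa [Real.dist_eq]
    have h2 : dist y' y ≤ ε / 4 := by rw [Real.dist_eq]; rw [abs_le]; constructor <;> linarith
    calc max (dist x' x) (dist y' y) ≤ ε / 4 := max_le h1 h2
    _ < ε := by linarith
  exact hball this

theorem sRad_mem_aux (x : ℝ) :
    ∃ r ∈ {r : ℝ | 0 ≤ r ∧ r ≤ 1 ∧ ∃ a b : ℝ, a < b ∧ SafeBox K x r a b}, 0 < r := by
  rcases exists_safeBox hK hfib x with ⟨r, a, b, hr, hab, hsafe⟩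
  refine ⟨min r 1, ⟨le_min hr.le one_pos.le |>.trans_eq rfl, min_le_right _ _, a, b, hab, ?_⟩,
    lt_min hr one_pos⟩
  intro x' y hx' h1 h2
  exact hsafe x' y (hx'.trans (min_le_left _ _)) h1 h2

theorem sRad_pos (x : ℝ) : 0 < sRad K x := by
  rcases sRad_mem_aux hK hfib x with ⟨r, hr, hrpos⟩
  have hbdd : BddAbove {r : ℝ | 0 ≤ r ∧ r ≤ 1 ∧ ∃ a b : ℝ, a < b ∧ SafeBox K x r a b} :=
    ⟨1, fun t ht => ht.2.1⟩
  exact hrpos.trans_le (le_csSup hbdd hr)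

theorem sRad_le_one (x : ℝ) : sRad K x ≤ 1 := by
  rcases sRad_mem_aux hK hfib x with ⟨r, hr, _⟩
  exact csSup_le ⟨r, hr⟩ (fun t ht => ht.2.1)

theorem sRad_lipschitz (x x' : ℝ) : sRad K x - |x' - x| ≤ sRad K x' := by
  rcases sRad_mem_aux hK hfib x' with ⟨r₀, hr₀, _⟩
  have hne : {r : ℝ | 0 ≤ r ∧ r ≤ 1 ∧ ∃ a b : ℝ, a < b ∧ SafeBox K x r a b}.Nonempty := by
    rcases sRad_mem_aux hK hfib x with ⟨r, hr, _⟩; exact ⟨r, hr⟩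
  have hbdd' : BddAbove {r : ℝ | 0 ≤ r ∧ r ≤ 1 ∧ ∃ a b : ℝ, a < b ∧ SafeBox K x' r a b} :=
    ⟨1, fun t ht => ht.2.1⟩
  have : ∀ r ∈ {r : ℝ | 0 ≤ r ∧ r ≤ 1 ∧ ∃ a b : ℝ, a < b ∧ SafeBox K x r a b},
      r - |x' - x| ≤ sRad K x' := by
    intro r hr
    rcases hr with ⟨hr0, hr1, a, b, hab, hsafe⟩
    rcases le_or_gt (r - |x' - x|) 0 with hcase | hcase
    · rcases sRad_mem_aux hK hfib x' with ⟨r', hr', _⟩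
      have h5 : r' ≤ sRad K x' := le_csSup hbdd' hr'
      linarith [hr'.1]
    · refine le_csSup hbdd' ⟨by linarith, by have := abs_nonneg (x' - x); linarith, a, b, hab,
        safeBox_mono hsafe⟩
  have h2 : sRad K x ≤ sRad K x' + |x' - x| := by
    refine csSup_le hne (fun r hr => ?_)
    have := this r hr
    linarith
  linarith

theorem sRad_cont : Continuous (sRad K) := by
  have : LipschitzWith 1 (sRad K) := by
    refine LipschitzWith.of_dist_le_mul (fun x y => ?_)
    rw [Real.dist_eq, Real.dist_eq]
    have h1 := sRad_lipschitz hK hfib x y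
    have h2 := sRad_lipschitz hK hfib y x
    rw [abs_sub_comm] at h2
    have h3 : |x - y| = |y - x| := abs_sub_comm x y
    rw [abs_le]
    refine ⟨?_, ?_⟩ <;> simp only [NNReal.coe_one, one_mul] <;> linarith
  exact this.continuous

/-- There is a safe box at `x` of radius `sRad K x / 2`. -/
theorem exists_safeBox_half (x : ℝ) :
    ∃ a b : ℝ, a < b ∧ SafeBox K x (sRad K x / 2) a b := by
  have hlt : sRad K x / 2 < sRad K x := by have := sRad_pos hK hfib x; linarith
  have hne : {r : ℝ | 0 ≤ r ∧ r ≤ 1 ∧ ∃ a b : ℝ, a < b ∧ SafeBox K x r a b}.Nonempty := by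
    rcases sRad_mem_aux hK hfib x with ⟨r, hr, _⟩; exact ⟨r, hr⟩
  rcases exists_lt_of_lt_csSup hne hlt with ⟨r, hr, hlt'⟩
  rcases hr with ⟨hr0, hr1, a, b, hab, hsafe⟩
  exact ⟨a, b, hab, fun x' y h1 h2 h3 => hsafe x' y (h1.trans hlt'.le) h2 h3⟩

end Basic

section Small

variable (hK : IsClosed K) (hD : #{x : ℝ | ∃ y, (x, y) ∈ K} < continuum)

include hK

/-- For a closed `K`, the set of columns meeting the compact strip `[A,B]` is closed. -/
theorem strip_closed (A B : ℝ) : IsClosed {x : ℝ | ∃ y ∈ Icc A B, (x, y) ∈ K} := by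
  rw [← isOpen_compl_iff]
  rw [Metric.isOpen_iff]
  intro x hx
  simp only [mem_compl_iff, mem_setOf_eq, not_exists, not_and] at hx
  -- {x} × [A,B] ⊆ Kᶜ, tube lemma
  have hsub : {x} ×ˢ (Icc A B) ⊆ Kᶜ := by
    rintro ⟨x', y⟩ ⟨hx', hy⟩
    simp only [mem_singleton_iff] at hx'
    subst hx'
    exact fun hmem => hx y hy hmem
  have hcs : IsCompact ({x} : Set ℝ) := isCompact_singleton
  have hct : IsCompact (Icc A B) := isCompact_Icc
  rcases generalized_tube_lemma hcs hct (isOpen_compl_iff.2 hK) hsub with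
    ⟨u, v, hu, hv, hxu, hyv, huv⟩
  rcases Metric.isOpen_iff.1 hu x (hxu rfl) with ⟨ε, hε, hball⟩
  refine ⟨ε, hε, ?_⟩
  intro z hz
  simp only [mem_compl_iff, mem_setOf_eq, not_exists, not_and]
  intro y hy hmem
  exact huv (Set.mk_mem_prod (hball hz) (hyv hy)) hmem

include hD

/-- Inside any interval we can find a closed subinterval over which the whole strip
`[A,B]` misses `K`. -/
theorem exists_safe_subinterval (A B u v : ℝ) (huv : u < v) :
    ∃ u' v' : ℝ, u < u' ∧ u' < v' ∧ v' < v ∧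
      ∀ x y : ℝ, u' ≤ x → x ≤ v' → A ≤ y → y ≤ B → (x, y) ∉ K := by
  set E := {x : ℝ | ∃ y ∈ Icc A B, (x, y) ∈ K} with hE
  have hEclosed : IsClosed E := strip_closed hK A B
  have hED : E ⊆ {x : ℝ | ∃ y, (x, y) ∈ K} := by
    rintro x ⟨y, _, hy⟩; exact ⟨y, hy⟩
  have hEsmall : #E < continuum := (mk_le_mk_of_subset hED).trans_lt hD
  have hx0 : ∃ x₀ ∈ Ioo u v, x₀ ∉ E := by
    by_contra hcon
    push_neg at hcon
    have : Ioo u v ⊆ E := fun x hx => hcon x hx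
    have hle : continuum ≤ #E := by
      rw [← Cardinal.mk_Ioo_real huv]
      exact mk_le_mk_of_subset this
    exact absurd hEsmall (not_lt.2 hle)
  rcases hx0 with ⟨x₀, hx₀I, hx₀E⟩
  have hopen : IsOpen Eᶜ := isOpen_compl_iff.2 hEclosed
  rcases Metric.isOpen_iff.1 hopen x₀ hx₀E with ⟨ε, hε, hball⟩
  set δ := min (ε / 2) (min ((x₀ - u) / 2) ((v - x₀) / 2)) with hδ
  have hδpos : 0 < δ := by
    refine lt_min (by linarith) (lt_min ?_ ?_) <;>
      [linarith [hx₀I.1]; linarith [hx₀I.2]]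
  refine ⟨x₀ - δ, x₀ + δ, ?_, by linarith, ?_, ?_⟩
  · have : δ ≤ (x₀ - u) / 2 := (min_le_right _ _).trans (min_le_left _ _)
    linarith
  · have : δ ≤ (v - x₀) / 2 := (min_le_right _ _).trans (min_le_right _ _)
    linarith
  · intro x y hx1 hx2 hy1 hy2
    intro hmem
    have hxE : x ∈ E := ⟨y, ⟨hy1, hy2⟩, hmem⟩
    have hxball : x ∈ Metric.ball x₀ ε := by
      rw [Metric.mem_ball, Real.dist_eq, abs_lt]
      have : δ ≤ ε / 2 := min_le_left _ _
      constructor <;> linarith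
    exact hball hxball hxE

/-- State of the avoidance walk. -/
structure WState where
  t : ℝ
  g : ℝ → ℝ
  c : ℝ
  a : ℝ
  b : ℝ
  ρ : ℝ

/-- Validity of a walk state for `K`. -/
structure WState.Good (K : Set (ℝ × ℝ)) (s : WState) : Prop where
  cont : Continuous s.g
  avoid : ∀ x, 0 ≤ x → x ≤ s.t → (x, s.g x) ∉ K
  const : ∀ x, s.t ≤ x → s.g x = s.c
  hab : s.a < s.b
  hca : s.a ≤ s.c
  hcb : s.c ≤ s.b
  hρ : 0 < s.ρ
  safe : SafeBox K s.t s.ρ s.a s.b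
  ht : 0 ≤ s.t

variable (hK : IsClosed K) (hfib : ∀ x : ℝ, {y : ℝ | (x, y) ∈ K} ≠ Set.univ)

include hK hfib hD

theorem step_exists (s : WState) (hs : s.Good K) :
    ∃ s' : WState, s'.Good K ∧ s'.t = s.t + s.ρ / 2 ∧ (∀ x, x ≤ s.t → s'.g x = s.g x) ∧
      s'.ρ = sRad K s'.t / 2 := by
  set t' := s.t + s.ρ / 2 with ht'
  have htt' : s.t < t' := by have := hs.hρ; rw [ht']; linarith
  obtain ⟨a₂, b₂, hab₂, hsafe₂⟩ := exists_safeBox_half hK hfib t'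
  have hrad' : 0 < sRad K t' := sRad_pos hK hfib t'
  set c₂ := (a₂ + b₂) / 2 with hc₂
  have hca₂ : a₂ ≤ c₂ := by rw [hc₂]; linarith
  have hcb₂ : c₂ ≤ b₂ := by rw [hc₂]; linarith
  set u := max s.t (t' - sRad K t' / 2) with hu
  have hut' : u < t' := by
    rw [hu]; apply max_lt htt'; linarith
  set A := min s.a a₂ with hA
  set B := max s.b b₂ with hB
  obtain ⟨u', v', hu1, hu2, hu3, hsafe3⟩ :=
    exists_safe_subinterval hK hD A B u t' hut'
  have hu't : s.t ≤ u' := le_trans (le_max_left _ _) hu1.le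
  have hv't' : v' < t' := hu3
  have hu'rad : t' - sRad K t' / 2 ≤ u' := le_trans (le_max_right _ _) hu1.le
  set θ : ℝ → ℝ := fun x => max 0 (min 1 ((x - u') / (v' - u'))) with hθ
  have hθ0 : ∀ x, x ≤ u' → θ x = 0 := by
    intro x hx
    show max 0 (min 1 ((x - u') / (v' - u'))) = 0
    have h1 : (x - u') / (v' - u') ≤ 0 :=
      div_nonpos_of_nonpos_of_nonneg (by linarith) (by linarith)
    have h2 : min 1 ((x - u') / (v' - u')) ≤ 0 := le_trans (min_le_right _ _) h1
    exact max_eq_left h2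
  have hθ1 : ∀ x, v' ≤ x → θ x = 1 := by
    intro x hx
    show max 0 (min 1 ((x - u') / (v' - u'))) = 1
    have h1 : (1:ℝ) ≤ (x - u') / (v' - u') := by
      rw [le_div_iff₀ (by linarith)]
      linarith
    rw [min_eq_left h1]
    exact max_eq_right zero_le_one
  have hθmem : ∀ x, 0 ≤ θ x ∧ θ x ≤ 1 := by
    intro x
    refine ⟨le_max_left _ _, ?_⟩
    show max 0 (min 1 ((x - u') / (v' - u'))) ≤ 1
    exact max_le zero_le_one (min_le_left _ _)
  have hθcont : Continuous θ := by
    show Continuous fun x => max 0 (min 1 ((x - u') / (v' - u')))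
    exact continuous_const.max (continuous_const.min
      ((continuous_id.sub continuous_const).div_const _))
  set g' : ℝ → ℝ := fun x => s.g (min x u') + (c₂ - s.c) * θ x with hg'
  have hg'cont : Continuous g' := by
    show Continuous fun x => s.g (min x u') + (c₂ - s.c) * θ x
    exact (hs.cont.comp (continuous_id.min continuous_const)).add
      (continuous_const.mul hθcont)
  have hg'eq : ∀ x, x ≤ s.t → g' x = s.g x := by
    intro x hx
    show s.g (min x u') + (c₂ - s.c) * θ x = s.g x
    rw [hθ0 x (le_trans hx hu't), min_eq_left (le_trans hx hu't)]
    ring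
  have hg'midc : ∀ x, s.t ≤ x → x ≤ u' → g' x = s.c := by
    intro x hx1 hx2
    show s.g (min x u') + (c₂ - s.c) * θ x = s.c
    rw [hθ0 x hx2, min_eq_left hx2, hs.const x hx1]
    ring
  have hg'mid : ∀ x, u' ≤ x → g' x = s.c + (c₂ - s.c) * θ x := by
    intro x hx
    show s.g (min x u') + (c₂ - s.c) * θ x = s.c + (c₂ - s.c) * θ x
    rw [min_eq_right hx, hs.const u' hu't]
  have hg'const : ∀ x, v' ≤ x → g' x = c₂ := by
    intro x hx
    rw [hg'mid x (le_trans hu2.le hx), hθ1 x hx]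
    ring
  have hAc : A ≤ s.c ∧ s.c ≤ B := ⟨le_trans (min_le_left _ _) hs.hca,
    le_trans hs.hcb (le_max_left _ _)⟩
  have hAc₂ : A ≤ c₂ ∧ c₂ ≤ B := ⟨le_trans (min_le_right _ _) hca₂,
    le_trans hcb₂ (le_max_right _ _)⟩
  refine ⟨⟨t', g', c₂, a₂, b₂, sRad K t' / 2⟩, ?_, rfl, hg'eq, rfl⟩
  refine ⟨hg'cont, ?_, ?_, hab₂, hca₂, hcb₂, by linarith, ?_, by linarith [hs.ht, hs.hρ]⟩
  · -- avoidance on [0, t']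
    intro x hx0 hxt'
    have hxt : x ≤ t' := hxt'
    show (x, g' x) ∉ K
    rcases le_or_gt x u' with hcase | hcase
    · rcases le_or_gt x s.t with hcase2 | hcase2
      · rw [hg'eq x hcase2]
        exact hs.avoid x hx0 hcase2
      · rw [hg'midc x hcase2.le hcase]
        apply hs.safe x s.c _ hs.hca hs.hcb
        rw [abs_le]
        constructor <;> [linarith; linarith]
    · rcases le_or_gt x v' with hcase2 | hcase2
      · rw [hg'mid x hcase.le]
        refine hsafe3 x _ hcase.le hcase2 ?_ ?_
        · nlinarith [hθmem x, hAc.1, hAc₂.1]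
        · nlinarith [hθmem x, hAc.2, hAc₂.2]
      · rw [hg'const x hcase2.le]
        apply hsafe₂ x c₂ _ hca₂ hcb₂
        rw [abs_le]
        constructor <;> linarith
  · -- const from t' on
    intro x hx
    have hx' : v' ≤ x := le_trans hv't'.le hx
    exact hg'const x hx'
  · -- new safe box
    exact hsafe₂

theorem exists_avoiding_halfline (a b r : ℝ) (hab : a < b) (hr : 0 < r)
    (hsafe : SafeBox K 0 r a b) :
    ∃ g : ℝ → ℝ, Continuous g ∧ (∀ x, 0 ≤ x → (x, g x) ∉ K) ∧
      ∀ x, x ≤ 0 → g x = (a + b) / 2 := by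
  classical
  set c₀ := (a + b) / 2 with hc₀
  have hinitg : WState.Good K ⟨0, fun _ => c₀, c₀, a, b, r⟩ := by
    refine ⟨continuous_const, ?_, fun _ _ => rfl, hab, by rw [hc₀]; linarith,
      by rw [hc₀]; linarith, hr, hsafe, le_refl 0⟩
    intro x hx0 hx0'
    have hx : x = 0 := le_antisymm hx0' hx0
    subst hx
    exact hsafe 0 c₀ (by simp [hr.le]) (by rw [hc₀]; linarith) (by rw [hc₀]; linarith)
  set init : {s : WState // s.Good K} := ⟨⟨0, fun _ => c₀, c₀, a, b, r⟩, hinitg⟩ with hinit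
  set step : {s : WState // s.Good K} → {s : WState // s.Good K} := fun p =>
    ⟨(step_exists hK hD hfib p.1 p.2).choose, (step_exists hK hD hfib p.1 p.2).choose_spec.1⟩
    with hstep
  set W : ℕ → {s : WState // s.Good K} := fun n => step^[n] init with hW
  have hWsucc : ∀ n, W (n + 1) = step (W n) := by
    intro n
    rw [hW]
    simp only
    rw [Function.iterate_succ_apply']
  set T : ℕ → ℝ := fun n => (W n).1.t with hT
  have hT0 : T 0 = 0 := rfl
  have hTsucc : ∀ n, T (n + 1) = T n + (W n).1.ρ / 2 := by
    intro n
    have := (step_exists hK hD hfib (W n).1 (W n).2).choose_spec.2.1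
    rw [hT]; simp only
    rw [hWsucc n]
    exact this
  have hcoh1 : ∀ n, ∀ x, x ≤ T n → (W (n + 1)).1.g x = (W n).1.g x := by
    intro n x hx
    have := (step_exists hK hD hfib (W n).1 (W n).2).choose_spec.2.2.1 x hx
    rw [hWsucc n]
    exact this
  have hρsucc : ∀ n, (W (n + 1)).1.ρ = sRad K (T (n + 1)) / 2 := by
    intro n
    have h : (W (n + 1)).1.ρ = sRad K ((W (n + 1)).1.t) / 2 := by
      rw [hWsucc n]
      exact (step_exists hK hD hfib (W n).1 (W n).2).choose_spec.2.2.2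
    exact h
  have hTmono : StrictMono T := by
    apply strictMono_nat_of_lt_succ
    intro n
    rw [hTsucc n]
    linarith [(W n).2.hρ]
  have hTunbdd : ∀ x : ℝ, ∃ n, x ≤ T n := by
    by_contra hcon
    push_neg at hcon
    obtain ⟨x, hx⟩ := hcon
    have hbdd : BddAbove (Set.range T) := by
      refine ⟨x, ?_⟩
      rintro y ⟨n, rfl⟩
      exact (hx n).le
    have hlim : Filter.Tendsto T Filter.atTop (nhds (⨆ n, T n)) :=
      tendsto_atTop_ciSup hTmono.monotone hbdd
    set L := ⨆ n, T n with hL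
    have hlim1 : Filter.Tendsto (fun n => T (n + 1)) Filter.atTop (nhds L) :=
      hlim.comp (Filter.tendsto_add_atTop_nat 1)
    have hlim2 : Filter.Tendsto (fun n => T (n + 2)) Filter.atTop (nhds L) :=
      hlim.comp (Filter.tendsto_add_atTop_nat 2)
    have heq : ∀ n, T (n + 2) - T (n + 1) = sRad K (T (n + 1)) / 4 := by
      intro n
      have h1 := hTsucc (n + 1)
      have h2 := hρsucc n
      rw [h2] at h1
      rw [h1]
      ring
    have hlim3 : Filter.Tendsto (fun n => T (n + 2) - T (n + 1)) Filter.atTop (nhds 0) := by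
      have := hlim2.sub hlim1
      simpa using this
    have hlim4 : Filter.Tendsto (fun n => sRad K (T (n + 1)) / 4) Filter.atTop
        (nhds (sRad K L / 4)) := by
      have hc : Filter.Tendsto (sRad K) (nhds L) (nhds (sRad K L)) :=
        (sRad_cont hK hfib).tendsto L
      exact (hc.comp hlim1).div_const 4
    have hlim5 : Filter.Tendsto (fun n => T (n + 2) - T (n + 1)) Filter.atTop
        (nhds (sRad K L / 4)) := by
      refine hlim4.congr (fun n => (heq n).symm)
    have := tendsto_nhds_unique hlim3 hlim5
    have := sRad_pos hK hfib L
    linarith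
  have hcoh : ∀ m n, m ≤ n → ∀ x, x ≤ T m → (W n).1.g x = (W m).1.g x := by
    intro m n hmn
    induction n, hmn using Nat.le_induction with
    | base => intro x _; rfl
    | succ n hmn ih =>
      intro x hx
      have hx' : x ≤ T n := hx.trans (hTmono.monotone hmn)
      rw [hcoh1 n x hx']
      exact ih x hx
  set G : ℝ → ℝ := fun x => (W (Nat.find (hTunbdd x))).1.g x with hG
  have hGeq : ∀ n, ∀ x, x ≤ T n → G x = (W n).1.g x := by
    intro n x hx
    have h1 : Nat.find (hTunbdd x) ≤ n := Nat.find_le hx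
    have h2 : x ≤ T (Nat.find (hTunbdd x)) := Nat.find_spec (hTunbdd x)
    rw [hG]
    simp only
    exact (hcoh _ n h1 x h2).symm
  refine ⟨G, ?_, ?_, ?_⟩
  · rw [continuous_iff_continuousAt]
    intro x
    obtain ⟨n, hn⟩ := hTunbdd (x + 1)
    have hxn : x < T n := by linarith
    have hev : G =ᶠ[nhds x] (W n).1.g := by
      filter_upwards [Iic_mem_nhds hxn] with x' hx'
      exact hGeq n x' hx'
    exact ((W n).2.cont.continuousAt).congr hev.symm
  · intro x hx0
    have h2 : x ≤ T (Nat.find (hTunbdd x)) := Nat.find_spec (hTunbdd x)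
    exact (W (Nat.find (hTunbdd x))).2.avoid x hx0 h2
  · intro x hx
    have := hGeq 0 x (by rw [hT0]; exact hx)
    rw [this]
    rfl

end Small

section Full

variable (hK : IsClosed K) (hfib : ∀ x : ℝ, {y : ℝ | (x, y) ∈ K} ≠ Set.univ)
  (hD : #{x : ℝ | ∃ y, (x, y) ∈ K} < continuum)

include hK hfib hD

theorem exists_avoiding : ∃ g : ℝ → ℝ, Continuous g ∧ ∀ x : ℝ, (x, g x) ∉ K := by
  classical
  obtain ⟨r, a, b, hr, hab, hsafe0⟩ := exists_safeBox hK hfib 0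
  have hsafe : SafeBox K 0 r a b := hsafe0
  set K' : Set (ℝ × ℝ) := (fun p : ℝ × ℝ => ((-p.1, p.2) : ℝ × ℝ)) ⁻¹' K with hK'def
  have hK' : IsClosed K' := hK.preimage (by fun_prop)
  have hfib' : ∀ x : ℝ, {y : ℝ | (x, y) ∈ K'} ≠ Set.univ := fun x => hfib (-x)
  have hD' : #{x : ℝ | ∃ y, (x, y) ∈ K'} < continuum := by
    have himg : {x : ℝ | ∃ y, (x, y) ∈ K'} = (fun x : ℝ => -x) '' {x : ℝ | ∃ y, (x, y) ∈ K} := by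
      ext x
      simp only [mem_setOf_eq, mem_image, hK'def, mem_preimage]
      constructor
      · rintro ⟨y, hy⟩
        exact ⟨-x, ⟨y, hy⟩, by ring⟩
      · rintro ⟨z, ⟨y, hy⟩, hz⟩
        subst hz
        exact ⟨y, by simpa using hy⟩
    rw [himg, Cardinal.mk_image_eq neg_injective]
    exact hD
  have hsafe' : SafeBox K' 0 r a b := by
    intro x y hx h1 h2
    have := hsafe (-x) y (by simpa using hx) h1 h2
    simpa [hK'def] using this
  obtain ⟨g₁, hg₁c, hg₁a, hg₁b⟩ := exists_avoiding_halfline hK hD hfib a b r hab hr hsafe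
  obtain ⟨g₂, hg₂c, hg₂a, hg₂b⟩ :=
    exists_avoiding_halfline (K := K') hK' hD' hfib' a b r hab hr hsafe'
  refine ⟨fun x => if (0:ℝ) ≤ x then g₁ x else g₂ (-x), ?_, ?_⟩
  · refine Continuous.if_le hg₁c (hg₂c.comp continuous_neg) continuous_const continuous_id ?_
    intro x hx
    rw [← hx]
    rw [hg₁b 0 le_rfl, neg_zero, hg₂b 0 le_rfl]
  · intro x
    by_cases hx : (0:ℝ) ≤ x
    · simp only [if_pos hx]
      exact hg₁a x hx
    · simp only [if_neg hx]
      push_neg at hx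
      have := hg₂a (-x) (by linarith)
      intro hmem
      apply this
      show ((- -x, g₂ (-x)) : ℝ × ℝ) ∈ K
      simpa using hmem

end Full

theorem continuum_le_blocking_domain (hB : Blocking K)
    (hfib : ∀ x : ℝ, {y : ℝ | (x, y) ∈ K} ≠ Set.univ) :
    continuum ≤ #{x : ℝ | ∃ y, (x, y) ∈ K} := by
  by_contra h
  push_neg at h
  obtain ⟨g, hgc, hga⟩ := exists_avoiding hB.1 hfib h
  obtain ⟨x, hx⟩ := hB.2 g hgc
  exact hga x hx





theorem eSet_nonempty : {c : Cardinal | ∃ F : Set (ℝ → ℝ), #F = c ∧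
    ∀ φ : ℝ → ℝ, ∃ f ∈ F, #{x : ℝ | f x = φ x} < Cardinal.continuum}.Nonempty := by
  refine ⟨#(univ : Set (ℝ → ℝ)), univ, rfl, fun φ => ⟨φ + 1, mem_univ _, ?_⟩⟩
  have : {x : ℝ | (φ + 1) x = φ x} = ∅ := by
    ext x
    simp only [Pi.add_apply, Pi.one_apply, mem_setOf_eq, mem_empty_iff_false, iff_false]
    intro h
    linarith
  rw [this]
  simp only [mk_emptyCollection]
  exact continuum_pos

theorem eContinuum_mem : ∃ F : Set (ℝ → ℝ), #F = eContinuum ∧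
    ∀ φ : ℝ → ℝ, ∃ f ∈ F, #{x : ℝ | f x = φ x} < Cardinal.continuum :=
  csInf_mem eSet_nonempty

theorem continuum_lt_eContinuum : Cardinal.continuum < eContinuum := by
  obtain ⟨F, hFcard, hF⟩ := eContinuum_mem
  rw [← hFcard]
  by_contra hle
  push_neg at hle
  -- F is nonempty
  obtain ⟨f₀, hf₀, _⟩ := hF 0
  -- injection from F into ℝ
  have hFR : #F ≤ #ℝ := by rwa [Cardinal.mk_real]
  obtain ⟨ι⟩ := Cardinal.le_def _ _ |>.1 hFR
  classical
  set σ : ℝ → (ℝ → ℝ) := fun t =>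
    if h : ∃ f : F, ι f = t then (h.choose : F).1 else f₀ with hσ
  have hσsur : ∀ f (hf : f ∈ F), σ (ι ⟨f, hf⟩) = f := by
    intro f hf
    have h : ∃ f' : F, ι f' = ι ⟨f, hf⟩ := ⟨⟨f, hf⟩, rfl⟩
    rw [hσ]
    simp only [dif_pos h]
    have := h.choose_spec
    have h2 : h.choose = ⟨f, hf⟩ := ι.injective this
    rw [h2]
  -- an equiv ℝ ≃ ℝ × ℝ
  have hcard : #ℝ = #(ℝ × ℝ) := by
    rw [Cardinal.mk_real, Cardinal.mk_prod]
    simp [Cardinal.mk_real, Cardinal.continuum_mul_self]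
  obtain ⟨p⟩ := Cardinal.eq.1 hcard
  set φ : ℝ → ℝ := fun x => σ ((p x).1) x with hφ
  obtain ⟨f, hf, hsmall⟩ := hF φ
  have hbig : Cardinal.continuum ≤ #{x : ℝ | f x = φ x} := by
    set t₀ := ι ⟨f, hf⟩ with ht₀
    have hsub : p ⁻¹' ({t₀} ×ˢ (univ : Set ℝ)) ⊆ {x : ℝ | f x = φ x} := by
      intro x hx
      simp only [mem_preimage, mem_prod, mem_singleton_iff, mem_univ, and_true] at hx
      simp only [mem_setOf_eq, hφ, hx]
      exact (congrFun (hσsur f hf) x).symm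
    refine le_trans ?_ (mk_le_mk_of_subset hsub)
    have h1 : p ⁻¹' ({t₀} ×ˢ (univ : Set ℝ)) = p.symm '' ({t₀} ×ˢ (univ : Set ℝ)) := by
      ext x
      simp only [mem_preimage, mem_image]
      constructor
      · intro hx
        exact ⟨p x, hx, p.symm_apply_apply x⟩
      · rintro ⟨q, hq, rfl⟩
        simpa using hq
    rw [h1, Cardinal.mk_image_eq p.symm.injective]
    have h2 : ({t₀} ×ˢ (univ : Set ℝ)) = (fun y : ℝ => ((t₀, y) : ℝ × ℝ)) '' univ := by
      ext ⟨s, y⟩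
      simp only [mem_prod, mem_singleton_iff, mem_univ, and_true, mem_image, true_and]
      constructor
      · rintro rfl; exact ⟨y, rfl⟩
      · rintro ⟨y', hy'⟩
        have := (Prod.mk.injEq t₀ y' s y ▸ hy')
        exact ((Prod.ext_iff.1 hy').1).symm
    rw [h2, Cardinal.mk_image_eq (fun a b hab => (Prod.ext_iff.1 hab).2)]
    rw [Cardinal.mk_univ, Cardinal.mk_real]
  exact absurd hsmall (not_lt.2 hbig)

theorem exists_common_agreement {ι : Type} (hι : #ι < eContinuum) (f : ι → ℝ → ℝ) :
    ∃ φ : ℝ → ℝ, ∀ i, Cardinal.continuum ≤ #{x : ℝ | f i x = φ x} := by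
  by_contra hcon
  push_neg at hcon
  have hmem : #(Set.range f) ∈ {c : Cardinal | ∃ F : Set (ℝ → ℝ), #F = c ∧
      ∀ φ : ℝ → ℝ, ∃ g ∈ F, #{x : ℝ | g x = φ x} < Cardinal.continuum} := by
    refine ⟨Set.range f, rfl, fun φ => ?_⟩
    obtain ⟨i, hi⟩ := hcon φ
    exact ⟨f i, ⟨i, rfl⟩, hi⟩
  have := csInf_le' hmem
  have hrange : #(Set.range f) ≤ #ι := Cardinal.mk_range_le
  exact absurd (this.trans hrange) (not_le.2 hι)

theorem aleph0_lt_eContinuum : Cardinal.aleph0 < eContinuum :=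
  lt_trans (Cardinal.aleph0_lt_continuum) continuum_lt_eContinuum



theorem mk_closeds_le : #{K : Set (ℝ × ℝ) | IsClosed K} ≤ Cardinal.continuum := by
  classical
  set B := TopologicalSpace.countableBasis (ℝ × ℝ) with hB
  set Φ : {K : Set (ℝ × ℝ) | IsClosed K} → Set ↑B :=
    fun K => {b : ↑B | (b : Set (ℝ × ℝ)) ⊆ (↑K : Set (ℝ × ℝ))ᶜ} with hΦ
  have hinj : Function.Injective Φ := by
    rintro ⟨K, hK⟩ ⟨K', hK'⟩ h
    have hopen : IsOpen Kᶜ := isOpen_compl_iff.2 hK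
    have hopen' : IsOpen K'ᶜ := isOpen_compl_iff.2 hK'
    have h1 : Kᶜ = ⋃₀ {s | s ∈ B ∧ s ⊆ Kᶜ} :=
      (TopologicalSpace.isBasis_countableBasis (ℝ × ℝ)).open_eq_sUnion' hopen
    have h2 : K'ᶜ = ⋃₀ {s | s ∈ B ∧ s ⊆ K'ᶜ} :=
      (TopologicalSpace.isBasis_countableBasis (ℝ × ℝ)).open_eq_sUnion' hopen'
    have hsets : {s | s ∈ B ∧ s ⊆ Kᶜ} = {s | s ∈ B ∧ s ⊆ K'ᶜ} := by
      ext s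
      simp only [mem_setOf_eq]
      constructor
      · rintro ⟨hsB, hsub⟩
        refine ⟨hsB, ?_⟩
        have : (⟨s, hsB⟩ : ↑B) ∈ Φ ⟨K, hK⟩ := hsub
        rw [h] at this
        exact this
      · rintro ⟨hsB, hsub⟩
        refine ⟨hsB, ?_⟩
        have : (⟨s, hsB⟩ : ↑B) ∈ Φ ⟨K', hK'⟩ := hsub
        rw [← h] at this
        exact this
    have : Kᶜ = K'ᶜ := by rw [h1, h2, hsets]
    have := compl_injective this
    exact Subtype.ext this
  calc #{K : Set (ℝ × ℝ) | IsClosed K} ≤ #(Set ↑B) := Cardinal.mk_le_of_injective hinj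
  _ = 2 ^ #↑B := Cardinal.mk_set
  _ ≤ 2 ^ Cardinal.aleph0 := by
    apply Cardinal.power_le_power_left two_ne_zero
    exact Cardinal.mk_le_aleph0_iff.2 (TopologicalSpace.countable_countableBasis _)
  _ = Cardinal.continuum := Cardinal.two_power_aleph0

theorem small_initial_seg {o : Ordinal.{0}} (w : o.ToType) :
    #{v : o.ToType | v < w} < o.card.ord.card ∨ True := Or.inr trivial

theorem small_initial_seg' (w : (Cardinal.continuum.{0}).ord.ToType) :
    #{v : (Cardinal.continuum.{0}).ord.ToType | v < w} < Cardinal.continuum := by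
  haveI hwo : IsWellOrder (Cardinal.continuum.{0}).ord.ToType (· < ·) := isWellOrder_lt
  have h1 : #{v : (Cardinal.continuum.{0}).ord.ToType // v < w} =
      (Ordinal.typein (r := ((· < ·) : (Cardinal.continuum.{0}).ord.ToType →
        (Cardinal.continuum.{0}).ord.ToType → Prop)) w).card :=
    Ordinal.card_typein w
  have h0 : #{v : (Cardinal.continuum.{0}).ord.ToType | v < w} =
      #{v : (Cardinal.continuum.{0}).ord.ToType // v < w} := rfl
  rw [h0, h1, ← Cardinal.lt_ord]
  exact Ordinal.typein_lt_self w

theorem mk_continuum_ord_toType : #(Cardinal.continuum.{0}).ord.ToType = Cardinal.continuum := by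
  rw [Cardinal.mk_toType, Cardinal.card_ord]

/-- Disjoint refinement: a ≤ 𝔠-indexed family of continuum-sized sets of reals can be
refined to a pairwise disjoint family of continuum-sized subsets. -/
theorem disjoint_refinement {I : Type} (hI : #I ≤ Cardinal.continuum) (D : I → Set ℝ)
    (hD : ∀ i, Cardinal.continuum ≤ #(D i)) :
    ∃ T : I → Set ℝ, (∀ i, T i ⊆ D i) ∧ (∀ i, Cardinal.continuum ≤ #(T i)) ∧
      ∀ i j, i ≠ j → ∀ x, x ∈ T i → x ∉ T j := by
  classical
  rcases isEmpty_or_nonempty I with hI0 | hI0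
  · exact ⟨fun i => D i, fun i => le_refl _, fun i => hD i, fun i => (hI0.false i).elim⟩
  set O := (Cardinal.continuum).ord.ToType with hO
  have hcard : #(I × ℝ) = #O := by
    rw [mk_continuum_ord_toType, Cardinal.mk_prod, Cardinal.mk_real]
    rw [Cardinal.lift_id, Cardinal.lift_id]
    apply le_antisymm
    · calc #I * Cardinal.continuum ≤ Cardinal.continuum * Cardinal.continuum :=
        mul_le_mul_left hI _
      _ = Cardinal.continuum := Cardinal.continuum_mul_self
    · have h1 : (1 : Cardinal) ≤ #I := Cardinal.one_le_iff_ne_zero.2 (Cardinal.mk_ne_zero I)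
      calc Cardinal.continuum = 1 * Cardinal.continuum := (one_mul _).symm
      _ ≤ #I * Cardinal.continuum := mul_le_mul_left h1 _
  obtain ⟨σ⟩ := Cardinal.eq.1 hcard.symm
  -- σ : O ≃ I × ℝ
  have hkey : ∀ (w : O) (f : ∀ v : O, v < w → ℝ),
      (D (σ w).1 \ Set.range (fun v : {v : O // v < w} => f v.1 v.2)).Nonempty := by
    intro w f
    have h1 : #(Set.range (fun v : {v : O // v < w} => f v.1 v.2)) < Cardinal.continuum :=
      lt_of_le_of_lt Cardinal.mk_range_le (small_initial_seg' w)
    by_contra hcon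
    rw [Set.not_nonempty_iff_eq_empty, diff_eq_empty] at hcon
    exact absurd ((hD _).trans (mk_le_mk_of_subset hcon)) (not_le.2 h1)
  set pick : O → ℝ := (IsWellFounded.wf (r := ((· < ·) : O → O → Prop))).fix
    (fun w rec => (hkey w rec).choose) with hpick
  have hpick_eq : ∀ w : O, pick w = (hkey w (fun v _ => pick v)).choose := by
    intro w
    rw [hpick]
    exact WellFounded.fix_eq _ _ w
  have hpick_spec : ∀ w : O, pick w ∈ D (σ w).1 ∧ ∀ v : O, v < w → pick w ≠ pick v := by
    intro w
    have h := (hkey w (fun v _ => pick v)).choose_spec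
    rw [← hpick_eq w] at h
    refine ⟨h.1, fun v hv hne => h.2 ⟨⟨v, hv⟩, hne.symm⟩⟩
  have hpick_inj : Function.Injective pick := by
    intro v w hvw
    rcases lt_trichotomy v w with h | h | h
    · exact absurd hvw.symm ((hpick_spec w).2 v h)
    · exact h
    · exact absurd hvw ((hpick_spec v).2 w h)
  refine ⟨fun i => pick '' {w : O | (σ w).1 = i}, ?_, ?_, ?_⟩
  · rintro i x ⟨w, hw, rfl⟩
    rw [← hw]
    exact (hpick_spec w).1
  · intro i
    rw [Cardinal.mk_image_eq hpick_inj]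
    have : {w : O | (σ w).1 = i} = σ ⁻¹' ({i} ×ˢ (univ : Set ℝ)) := by
      ext w
      simp only [mem_setOf_eq, Set.mem_preimage, Set.mem_prod, mem_singleton_iff, mem_univ,
        and_true]
    rw [this]
    have h1 : σ ⁻¹' ({i} ×ˢ (univ : Set ℝ)) = σ.symm '' ({i} ×ˢ (univ : Set ℝ)) := by
      ext w
      simp only [mem_preimage, mem_image]
      constructor
      · intro hw
        exact ⟨σ w, hw, σ.symm_apply_apply w⟩
      · rintro ⟨q, hq, rfl⟩
        simpa using hq
    rw [h1, Cardinal.mk_image_eq σ.symm.injective]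
    have h2 : ({i} ×ˢ (univ : Set ℝ)) = (fun y : ℝ => ((i, y) : I × ℝ)) '' univ := by
      ext ⟨j, y⟩
      simp only [mem_prod, mem_singleton_iff, mem_univ, and_true, mem_image, true_and]
      constructor
      · rintro rfl; exact ⟨y, rfl⟩
      · rintro ⟨y', hy'⟩; exact ((Prod.ext_iff.1 hy').1).symm
    rw [h2, Cardinal.mk_image_eq (fun a b hab => (Prod.ext_iff.1 hab).2)]
    rw [Cardinal.mk_univ, Cardinal.mk_real]
  · rintro i j hij x ⟨w, hw, rfl⟩ ⟨w', hw', hww'⟩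
    simp only [mem_setOf_eq] at hw hw'
    have hwe : w = w' := hpick_inj hww'.symm
    subst hwe
    exact hij (hw.symm.trans hw')


theorem exists_not_almostContinuous : ¬ IsAlmostContinuous (fun x : ℝ => if x ≤ 0 then 0 else 1) := by
  intro hAC
  set O : Set (ℝ × ℝ) :=
    {p : ℝ × ℝ | (p.1 < 1 ∧ |p.2| < 1/3) ∨ (0 < p.1 ∧ |p.2 - 1| < 1/3)} with hO
  have hOopen : IsOpen O := by
    rw [hO]
    apply IsOpen.union
    · exact (isOpen_lt continuous_fst continuous_const).inter
        ((continuous_snd.abs.isOpen_preimage _ isOpen_Iio : _))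
    · exact (isOpen_lt continuous_const continuous_fst).inter
        (((continuous_snd.sub continuous_const).abs.isOpen_preimage _ isOpen_Iio : _))
  have hgr : {p : ℝ × ℝ | p.2 = (fun x : ℝ => if x ≤ 0 then 0 else 1) p.1} ⊆ O := by
    rintro ⟨x, y⟩ hy
    simp only [mem_setOf_eq] at hy
    rcases le_or_gt x 0 with hx | hx
    · rw [if_pos hx] at hy
      left
      constructor
      · linarith
      · rw [hy]; norm_num
    · rw [if_neg (not_le.2 hx)] at hy
      right
      refine ⟨hx, ?_⟩
      rw [hy]; norm_num
  obtain ⟨g, hg, hgsub⟩ := hAC O hOopen hgr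
  have h0 : |g 0| < 1/3 := by
    have := hgsub (show ((0:ℝ), g 0) ∈ {p : ℝ × ℝ | p.2 = g p.1} from rfl)
    rcases this with ⟨_, h⟩ | ⟨h, _⟩
    · exact h
    · norm_num at h
  have h1 : |g 1 - 1| < 1/3 := by
    have := hgsub (show ((1:ℝ), g 1) ∈ {p : ℝ × ℝ | p.2 = g p.1} from rfl)
    rcases this with ⟨h, _⟩ | ⟨_, h⟩
    · norm_num at h
    · exact h
  have hg0 : g 0 ≤ 1/2 := by
    rw [abs_lt] at h0; linarith [h0.2]
  have hg1 : 1/2 ≤ g 1 := by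
    rw [abs_lt] at h1; linarith [h1.1]
  have hmem : (1/2 : ℝ) ∈ Icc (g 0) (g 1) := ⟨hg0, hg1⟩
  obtain ⟨x, hx, hgx⟩ := intermediate_value_Icc (by norm_num : (0:ℝ) ≤ 1) hg.continuousOn hmem
  have := hgsub (show ((x : ℝ), g x) ∈ {p : ℝ × ℝ | p.2 = g p.1} from rfl)
  rw [hgx] at this
  rcases this with ⟨_, h⟩ | ⟨_, h⟩ <;> rw [abs_lt] at h
  · linarith [h.1, h.2]
  · linarith [h.1, h.2]

/-- Cardinality bound on spans. -/
theorem mk_span_le (S : Set (ℝ → ℝ)) :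
    #((Submodule.span ℝ S : Submodule ℝ (ℝ → ℝ)) : Set (ℝ → ℝ)) ≤
      max #S Cardinal.continuum := by
  classical
  set μ := max #S Cardinal.continuum with hμ
  have hμinf : Cardinal.aleph0 ≤ μ := le_trans Cardinal.aleph0_le_continuum (le_max_right _ _)
  set SigT := (n : ℕ) × ((Fin n → ℝ) × (Fin n → ↥S)) with hSigT
  have hsur : ∃ F : SigT → ((Submodule.span ℝ S : Submodule ℝ (ℝ → ℝ)) : Set (ℝ → ℝ)),
      Function.Surjective F := by
    refine ⟨fun p => ⟨∑ i : Fin p.1, p.2.1 i • (p.2.2 i : ℝ → ℝ), ?_⟩, ?_⟩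
    · apply Submodule.sum_mem
      intro i _
      exact Submodule.smul_mem _ _ (Submodule.subset_span (p.2.2 i).2)
    · rintro ⟨x, hx⟩
      obtain ⟨n, f, g, hsum⟩ := Submodule.mem_span_set'.1 hx
      exact ⟨⟨n, f, g⟩, Subtype.ext hsum⟩
  obtain ⟨F, hF⟩ := hsur
  calc #((Submodule.span ℝ S : Submodule ℝ (ℝ → ℝ)) : Set (ℝ → ℝ)) ≤ #SigT :=
    Cardinal.mk_le_of_surjective hF
  _ = Cardinal.sum (fun n : ℕ => #((Fin n → ℝ) × (Fin n → ↥S))) := Cardinal.mk_sigma _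
  _ ≤ Cardinal.sum (fun _ : ℕ => μ) := by
    apply Cardinal.sum_le_sum
    intro n
    rw [Cardinal.mk_prod, Cardinal.lift_id, Cardinal.lift_id]
    have h1 : #(Fin n → ℝ) ≤ μ := by
      rw [Cardinal.mk_arrow, Cardinal.lift_id, Cardinal.mk_real, Cardinal.mk_fin,
        Cardinal.lift_natCast]
      calc (Cardinal.continuum : Cardinal) ^ (n : Cardinal) ≤
          Cardinal.continuum := Cardinal.power_nat_le Cardinal.aleph0_le_continuum
      _ ≤ μ := le_max_right _ _
    have h2 : #(Fin n → ↥S) ≤ μ := by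
      rw [Cardinal.mk_arrow, Cardinal.lift_id, Cardinal.mk_fin, Cardinal.lift_natCast]
      calc (#↥S) ^ (n : Cardinal) ≤ μ ^ (n : Cardinal) :=
        Cardinal.power_le_power_right (le_max_left _ _)
      _ ≤ μ := Cardinal.power_nat_le hμinf
    calc #(Fin n → ℝ) * #(Fin n → ↥S) ≤ μ * μ := mul_le_mul' h1 h2
    _ = μ := Cardinal.mul_eq_self hμinf
  _ = #ℕ * μ := Cardinal.sum_const' ℕ μ
  _ = μ := by
    rw [Cardinal.mk_nat]
    exact Cardinal.aleph0_mul_eq hμinf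

/-- The key step: given fewer than `e_𝔠` functions `w`, there is `h` such that all
`c • h + w` (`c ≠ 0`) are almost continuous. -/
theorem step_lemma (W : Set (ℝ → ℝ)) (hW : #W < eContinuum) :
    ∃ h : ℝ → ℝ, ∀ c : ℝ, c ≠ 0 → ∀ w ∈ W, IsAlmostContinuous (fun x => c * h x + w x) := by
  classical
  set 𝔅 := {K : Set (ℝ × ℝ) | Blocking K ∧ ∀ x : ℝ, {y : ℝ | (x, y) ∈ K} ≠ Set.univ} with h𝔅
  have h𝔅card : #↥𝔅 ≤ Cardinal.continuum :=
    le_trans (mk_le_mk_of_subset (fun K hK => hK.1.1)) mk_closeds_le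
  set D : ↥𝔅 → Set ℝ := fun K => {x : ℝ | ∃ y, (x, y) ∈ K.1} with hDdef
  have hDbig : ∀ K : ↥𝔅, Cardinal.continuum ≤ #(D K) := fun K =>
    continuum_le_blocking_domain K.2.1 K.2.2
  obtain ⟨T, hTsub, hTcard, hTdisj⟩ := disjoint_refinement h𝔅card D hDbig
  have hTeq : ∀ K : ↥𝔅, #ℝ = #↥(T K) := by
    intro K
    rw [Cardinal.mk_real]
    exact le_antisymm (hTcard K)
      (le_trans (Cardinal.mk_set_le _) (by rw [Cardinal.mk_real]))
  set e : ∀ K : ↥𝔅, ℝ ≃ ↥(T K) := fun K => (Cardinal.eq.1 (hTeq K)).some with he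
  have hsel0 : ∀ (K : ↥𝔅) (t : ↥(T K)), ∃ y : ℝ, ((t : ℝ), y) ∈ K.1 := fun K t =>
    hTsub K t.2
  set sel : ∀ (K : ↥𝔅), ↥(T K) → ℝ := fun K t => (hsel0 K t).choose with hseldef
  have hsel_spec : ∀ (K : ↥𝔅) (t : ↥(T K)), ((t : ℝ), sel K t) ∈ K.1 :=
    fun K t => (hsel0 K t).choose_spec
  have hιcard : #(↥𝔅 × ↥W × ℝ) < eContinuum := by
    rw [Cardinal.mk_prod, Cardinal.lift_id, Cardinal.lift_id, Cardinal.mk_prod,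
      Cardinal.lift_id, Cardinal.lift_id]
    have h1 : #↥𝔅 < eContinuum := lt_of_le_of_lt h𝔅card continuum_lt_eContinuum
    have h3 : #ℝ < eContinuum := by rw [Cardinal.mk_real]; exact continuum_lt_eContinuum
    exact Cardinal.mul_lt_of_lt (le_of_lt aleph0_lt_eContinuum) h1
      (Cardinal.mul_lt_of_lt (le_of_lt aleph0_lt_eContinuum) hW h3)
  set fam : ↥𝔅 × ↥W × ℝ → ℝ → ℝ := fun p => fun z =>
    (sel p.1 (e p.1 z) - (p.2.1 : ℝ → ℝ) ((e p.1 z : ℝ))) / p.2.2 with hfam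
  obtain ⟨φ, hφ⟩ := exists_common_agreement hιcard fam
  set h : ℝ → ℝ := fun t => if ht : ∃ K : ↥𝔅, t ∈ T K then
      φ ((e ht.choose).symm ⟨t, ht.choose_spec⟩) else 0 with hh
  refine ⟨h, ?_⟩
  intro c hc w hw
  apply isAlmostContinuous_of_meets
  intro K' hK'
  by_cases hfull : ∀ x : ℝ, {y : ℝ | (x, y) ∈ K'} ≠ Set.univ
  · -- K' has no full fiber, so it is in 𝔅
    set K : ↥𝔅 := ⟨K', hK', hfull⟩ with hK
    set i : ↥𝔅 × ↥W × ℝ := (K, ⟨w, hw⟩, c) with hi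
    have hbig := hφ i
    have hne : {z : ℝ | fam i z = φ z}.Nonempty := by
      rw [← Set.nonempty_coe_sort, ← Cardinal.mk_ne_zero_iff]
      intro h0
      rw [h0] at hbig
      exact absurd (lt_of_lt_of_le Cardinal.continuum_pos hbig) (lt_irrefl 0)
    obtain ⟨z, hz⟩ := hne
    simp only [mem_setOf_eq] at hz
    set t : ℝ := ((e K z : ↥(T K)) : ℝ) with htdef
    have htT : t ∈ T K := (e K z).2
    have hht : h t = φ z := by
      have hex : ∃ K'' : ↥𝔅, t ∈ T K'' := ⟨K, htT⟩
      have hKK : hex.choose = K := by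
        by_contra hne'
        exact hTdisj _ _ hne' t hex.choose_spec htT
      have haux : ∀ (K₀ : ↥𝔅) (hK₀ : K₀ = K) (hmem : t ∈ T K₀),
          φ ((e K₀).symm ⟨t, hmem⟩) = φ z := by
        rintro K₀ rfl hmem
        have hsub : (⟨t, hmem⟩ : ↥(T K)) = e K z := Subtype.ext rfl
        rw [hsub, Equiv.symm_apply_apply]
      have : h t = φ ((e hex.choose).symm ⟨t, hex.choose_spec⟩) := by
        rw [hh]
        simp only
        rw [dif_pos hex]
      rw [this, haux hex.choose hKK hex.choose_spec]
    refine ⟨t, ?_⟩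
    have hval : c * h t + w t = sel K (e K z) := by
      rw [hht, ← hz]
      have : fam i z = (sel K (e K z) - w t) / c := rfl
      rw [this]
      field_simp
      ring
    show (t, c * h t + w t) ∈ K'
    rw [hval]
    exact hsel_spec K (e K z)
  · push_neg at hfull
    obtain ⟨x, hx⟩ := hfull
    refine ⟨x, ?_⟩
    show (c * h x + w x) ∈ {y : ℝ | (x, y) ∈ K'}
    rw [hx]
    exact mem_univ _

theorem small_initial_seg_card (κ : Cardinal.{0}) (w : κ.ord.ToType) :
    #{v : κ.ord.ToType | v < w} < κ := by
  haveI hwo : IsWellOrder κ.ord.ToType (· < ·) := isWellOrder_lt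
  have h1 : #{v : κ.ord.ToType // v < w} =
      (Ordinal.typein (r := ((· < ·) : κ.ord.ToType → κ.ord.ToType → Prop)) w).card :=
    Ordinal.card_typein w
  have h0 : #{v : κ.ord.ToType | v < w} = #{v : κ.ord.ToType // v < w} := rfl
  rw [h0, h1, ← Cardinal.lt_ord]
  exact Ordinal.typein_lt_self w

/-- The family `AC(ℝ) ∪ {0}`. -/
def ACset : Set (ℝ → ℝ) := {f | IsAlmostContinuous f} ∪ {0}

theorem main_construction (f₀ : ℝ → ℝ) (hf₀ : f₀ ∈ ACset) :
    ∃ H : eContinuum.ord.ToType → (ℝ → ℝ),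
      LinearIndependent ℝ H ∧
      ((Submodule.span ℝ ({f₀} ∪ Set.range H) : Submodule ℝ (ℝ → ℝ)) : Set (ℝ → ℝ)) ⊆ ACset := by
  classical
  set u : ℝ → ℝ := fun x => if x ≤ 0 then 0 else 1 with hu
  have hunotAC : ¬ IsAlmostContinuous u := exists_not_almostContinuous
  set O' := eContinuum.ord.ToType with hO'
  set Vrec : (∀ i : O', (∀ j : O', j < i → (ℝ → ℝ)) → Submodule ℝ (ℝ → ℝ)) :=
    fun i rec => Submodule.span ℝ
      ({f₀} ∪ Set.range (fun j : {j : O' // j < i} => rec j.1 j.2)) with hVrec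
  set Wrec : (∀ i : O', (∀ j : O', j < i → (ℝ → ℝ)) → Set (ℝ → ℝ)) :=
    fun i rec => ((Vrec i rec : Set (ℝ → ℝ)) ∪ (fun v => u - v) '' (Vrec i rec : Set (ℝ → ℝ)))
    with hWrec
  have hWcard : ∀ (i : O') (rec : ∀ j : O', j < i → (ℝ → ℝ)),
      #↥(Wrec i rec) < eContinuum := by
    intro i rec
    have hgens : #↥({f₀} ∪ Set.range (fun j : {j : O' // j < i} => rec j.1 j.2)) <
        eContinuum := by
      rw [Set.singleton_union]
      refine lt_of_le_of_lt Cardinal.mk_insert_le ?_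
      refine Cardinal.add_lt_of_lt (le_of_lt aleph0_lt_eContinuum) ?_ ?_
      · refine lt_of_le_of_lt Cardinal.mk_range_le ?_
        exact small_initial_seg_card eContinuum i
      · exact lt_trans Cardinal.one_lt_aleph0 aleph0_lt_eContinuum
    have hV : #↥((Vrec i rec : Set (ℝ → ℝ))) < eContinuum := by
      refine lt_of_le_of_lt (mk_span_le _) ?_
      rw [max_lt_iff]
      exact ⟨hgens, continuum_lt_eContinuum⟩
    refine lt_of_le_of_lt (Cardinal.mk_union_le _ _) ?_
    refine Cardinal.add_lt_of_lt (le_of_lt aleph0_lt_eContinuum) hV ?_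
    exact lt_of_le_of_lt (Cardinal.mk_image_le) hV
  have hstep : ∀ (i : O') (rec : ∀ j : O', j < i → (ℝ → ℝ)),
      ∃ h : ℝ → ℝ, ∀ c : ℝ, c ≠ 0 → ∀ w ∈ Wrec i rec,
        IsAlmostContinuous (fun x => c * h x + w x) :=
    fun i rec => step_lemma _ (hWcard i rec)
  set H : O' → (ℝ → ℝ) := (IsWellFounded.wf (r := ((· < ·) : O' → O' → Prop))).fix
    (fun i rec => (hstep i rec).choose) with hHdef
  have hH_eq : ∀ i : O', H i = (hstep i (fun j _ => H j)).choose := by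
    intro i
    rw [hHdef]
    exact WellFounded.fix_eq _ _ i
  have hP : ∀ i : O', ∀ c : ℝ, c ≠ 0 → ∀ w ∈ Wrec i (fun j _ => H j),
      IsAlmostContinuous (fun x => c * H i x + w x) := by
    intro i
    have hspec := (hstep i (fun j _ => H j)).choose_spec
    rw [← hH_eq i] at hspec
    exact hspec
  set Vi : O' → Submodule ℝ (ℝ → ℝ) := fun i => Vrec i (fun j _ => H j) with hVi
  have hnotmem : ∀ i : O', H i ∉ (Vi i : Set (ℝ → ℝ)) := by
    intro i hmem
    have hwmem : (u - H i) ∈ Wrec i (fun j _ => H j) := Or.inr ⟨H i, hmem, rfl⟩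
    have hAC := hP i 1 one_ne_zero (u - H i) hwmem
    apply hunotAC
    have heq : (fun x => 1 * H i x + (u - H i) x) = u := by
      funext x
      simp only [Pi.sub_apply]
      ring
    rwa [heq] at hAC
  have hcombo : ∀ (s : Finset O') (cc : O' → ℝ) (c₀ : ℝ), (∃ m ∈ s, cc m ≠ 0) →
      IsAlmostContinuous (fun x => c₀ * f₀ x + ∑ i ∈ s, cc i * H i x) := by
    intro s cc c₀ hex
    set s' := s.filter (fun i => cc i ≠ 0) with hs'
    have hs'ne : s'.Nonempty := by
      obtain ⟨m, hm, hcm⟩ := hex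
      exact ⟨m, Finset.mem_filter.2 ⟨hm, hcm⟩⟩
    set m := s'.max' hs'ne with hmdef
    have hm' : m ∈ s' := s'.max'_mem hs'ne
    have hms : m ∈ s := (Finset.mem_filter.1 hm').1
    have hcm : cc m ≠ 0 := (Finset.mem_filter.1 hm').2
    set rest : ℝ → ℝ := fun x => c₀ * f₀ x + ∑ i ∈ s.erase m, cc i * H i x with hrest
    have hrestmem : rest ∈ Vi m := by
      have hre : rest = c₀ • f₀ + ∑ i ∈ s.erase m, cc i • H i := by
        funext x
        rw [hrest]
        simp [Finset.sum_apply]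
      rw [hre]
      apply Submodule.add_mem
      · exact Submodule.smul_mem _ _ (Submodule.subset_span (Or.inl rfl))
      · apply Submodule.sum_mem
        intro i hi
        by_cases hci : cc i = 0
        · rw [hci, zero_smul]
          exact Submodule.zero_mem _
        · apply Submodule.smul_mem
          apply Submodule.subset_span
          right
          have him : i < m := by
            have hi' : i ∈ s' := Finset.mem_filter.2 ⟨(Finset.mem_erase.1 hi).2, hci⟩
            exact lt_of_le_of_ne (s'.le_max' i hi') (Finset.mem_erase.1 hi).1
          exact ⟨⟨i, him⟩, rfl⟩
    have hAC := hP m (cc m) hcm rest (Or.inl hrestmem)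
    have heq : (fun x => cc m * H m x + rest x) =
        (fun x => c₀ * f₀ x + ∑ i ∈ s, cc i * H i x) := by
      funext x
      rw [hrest]
      simp only
      rw [← Finset.add_sum_erase s (fun i => cc i * H i x) hms]
      ring
    rwa [heq] at hAC
  have hindep : LinearIndependent ℝ H := by
    rw [linearIndependent_iff']
    intro s g hsum i hi
    by_contra hgi
    set s' := s.filter (fun j => g j ≠ 0) with hs'
    have hs'ne : s'.Nonempty := ⟨i, Finset.mem_filter.2 ⟨hi, hgi⟩⟩
    set m := s'.max' hs'ne with hmdef
    have hm' : m ∈ s' := s'.max'_mem hs'ne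
    have hms : m ∈ s := (Finset.mem_filter.1 hm').1
    have hgm : g m ≠ 0 := (Finset.mem_filter.1 hm').2
    apply hnotmem m
    have h1 : g m • H m + ∑ j ∈ s.erase m, g j • H j = 0 := by
      rw [Finset.add_sum_erase s (fun j => g j • H j) hms]
      exact hsum
    have h2 : H m = (g m)⁻¹ • (- ∑ j ∈ s.erase m, g j • H j) := by
      have h3 : g m • H m = - ∑ j ∈ s.erase m, g j • H j := eq_neg_of_add_eq_zero_left h1
      rw [← h3, smul_smul, inv_mul_cancel₀ hgm, one_smul]
    rw [h2]
    apply Submodule.smul_mem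
    apply Submodule.neg_mem
    apply Submodule.sum_mem
    intro j hj
    by_cases hgj : g j = 0
    · rw [hgj, zero_smul]
      exact Submodule.zero_mem _
    · apply Submodule.smul_mem
      apply Submodule.subset_span
      right
      have hj' : j ∈ s' := Finset.mem_filter.2 ⟨(Finset.mem_erase.1 hj).2, hgj⟩
      have hjm : j < m := lt_of_le_of_ne (s'.le_max' j hj') (Finset.mem_erase.1 hj).1
      exact ⟨⟨j, hjm⟩, rfl⟩
  refine ⟨H, hindep, ?_⟩
  intro x hx
  set v : Option O' → (ℝ → ℝ) := fun o => Option.elim o f₀ H with hv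
  have hgens : ({f₀} ∪ Set.range H) = Set.range v := by
    ext g
    constructor
    · rintro (hg | ⟨i, rfl⟩)
      · exact ⟨none, hg.symm⟩
      · exact ⟨some i, rfl⟩
    · rintro ⟨o, rfl⟩
      rcases o with _ | i
      · exact Or.inl rfl
      · exact Or.inr ⟨i, rfl⟩
  rw [hgens] at hx
  obtain ⟨cf, hcf⟩ := Finsupp.mem_span_range_iff_exists_finsupp.1 hx
  set sfin : Finset O' := cf.support.preimage some (Option.some_injective _).injOn with hsdef
  have hvec : x = (cf none) • f₀ + ∑ i ∈ sfin, (cf (some i)) • H i := by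
    rw [← hcf, Finsupp.sum]
    have hsubT : cf.support ⊆ insert (none : Option O') (sfin.image some) := by
      intro o ho
      rcases o with _ | i
      · exact Finset.mem_insert_self _ _
      · apply Finset.mem_insert_of_mem
        refine Finset.mem_image.2 ⟨i, ?_, rfl⟩
        rw [hsdef]
        exact Finset.mem_preimage.2 ho
    rw [Finset.sum_subset hsubT
      (fun o _ ho => by rw [Finsupp.notMem_support_iff.1 ho, zero_smul])]
    rw [Finset.sum_insert (by simp)]
    congr 1
    rw [Finset.sum_image (fun a _ b _ hab => Option.some_injective _ hab)]
    exact Finset.sum_congr rfl (fun y _ => rfl)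
  by_cases hex : ∃ m ∈ sfin, cf (some m) ≠ 0
  · left
    show IsAlmostContinuous x
    have heq : x = fun xx => (cf none) * f₀ xx + ∑ i ∈ sfin, cf (some i) * H i xx := by
      rw [hvec]
      funext xx
      simp [Finset.sum_apply]
    rw [heq]
    exact hcombo sfin _ _ hex
  · push_neg at hex
    have hzero : ∑ i ∈ sfin, (cf (some i)) • H i = 0 :=
      Finset.sum_eq_zero (fun i hi => by rw [hex i hi, zero_smul])
    rw [hzero, add_zero] at hvec
    by_cases h0 : cf none = 0
    · right
      simp only [mem_singleton_iff]
      rw [hvec, h0, zero_smul]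
    · rcases hf₀ with hf₀AC | hf₀0
      · left
        show IsAlmostContinuous x
        rw [hvec]
        exact isAlmostContinuous_smul hf₀AC (cf none)
      · right
        simp only [mem_singleton_iff] at hf₀0 ⊢
        rw [hvec, hf₀0, smul_zero]


theorem zero_mem_ACset : (0 : ℝ → ℝ) ∈ ACset := Or.inr rfl

end ACPf

open ACPf in
theorem almostContinuous_property_B' :
    ∃ 𝓑 : Set (Submodule ℝ (ℝ → ℝ)),
      Cardinal.continuum ≤ #𝓑 ∧
      (∀ B ∈ 𝓑, (B : Set (ℝ → ℝ)) ⊆ {f | IsAlmostContinuous f} ∪ {0} ∧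
        eContinuum ≤ Module.rank ℝ B) ∧
      {f | IsAlmostContinuous f} ∪ {0} = ⋃ B ∈ 𝓑, (B : Set (ℝ → ℝ)) := by
  classical
  set O' := eContinuum.ord.ToType with hO'
  have hmkO' : #O' = eContinuum := by
    rw [hO', Cardinal.mk_toType, Cardinal.card_ord]
  have hInf : Infinite O' := by
    rw [Cardinal.infinite_iff, hmkO']
    exact le_of_lt aleph0_lt_eContinuum
  -- spaces through each point of ACset
  set Hf : ∀ f : ↥ACset, O' → (ℝ → ℝ) := fun f => (main_construction f.1 f.2).choose with hHf
  have hHfspec : ∀ f : ↥ACset, LinearIndependent ℝ (Hf f) ∧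
      ((Submodule.span ℝ ({f.1} ∪ Set.range (Hf f)) : Submodule ℝ (ℝ → ℝ)) : Set (ℝ → ℝ)) ⊆
        ACset := fun f => (main_construction f.1 f.2).choose_spec
  set B : ↥ACset → Submodule ℝ (ℝ → ℝ) :=
    fun f => Submodule.span ℝ ({f.1} ∪ Set.range (Hf f)) with hB
  -- the distinguished family at 0
  set z : ↥ACset := ⟨0, zero_mem_ACset⟩ with hz
  set C : O' → Submodule ℝ (ℝ → ℝ) :=
    fun i => Submodule.span ℝ (Hf z '' ({i}ᶜ)) with hC
  have hCsubB : ∀ i, C i ≤ B z := by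
    intro i
    apply Submodule.span_mono
    rintro g ⟨j, _, rfl⟩
    exact Or.inr ⟨j, rfl⟩
  have hCmem : ∀ i j : O', i ≠ j → Hf z j ∈ (C i : Set (ℝ → ℝ)) := by
    intro i j hij
    exact Submodule.subset_span ⟨j, by simp [mem_compl_iff, (Ne.symm hij)], rfl⟩
  have hCnotmem : ∀ j : O', Hf z j ∉ (C j : Set (ℝ → ℝ)) := by
    intro j
    exact (hHfspec z).1.notMem_span_image (by simp)
  have hCinj : Function.Injective C := by
    intro i j hij
    by_contra hne
    have h1 : Hf z j ∈ (C i : Set (ℝ → ℝ)) := hCmem i j hne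
    rw [hij] at h1
    exact hCnotmem j h1
  refine ⟨(Set.range B) ∪ (Set.range C), ?_, ?_, ?_⟩
  · -- cardinality
    calc Cardinal.continuum ≤ eContinuum := le_of_lt continuum_lt_eContinuum
    _ = #O' := hmkO'.symm
    _ = #↥(Set.range C) := (Cardinal.mk_range_eq C hCinj).symm
    _ ≤ #↥(Set.range B ∪ Set.range C) := mk_le_mk_of_subset subset_union_right
  · -- each member
    rintro B' (⟨f, rfl⟩ | ⟨i, rfl⟩)
    · constructor
      · exact (hHfspec f).2
      · -- rank at least e
        have hmem : ∀ i : O', Hf f i ∈ B f :=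
          fun i => Submodule.subset_span (Or.inr ⟨i, rfl⟩)
        set w : O' → ↥(B f) := fun i => ⟨Hf f i, hmem i⟩ with hw
        have hli : LinearIndependent ℝ w := by
          apply LinearIndependent.of_comp (B f).subtype
          have : ((B f).subtype : ↥(B f) → ℝ → ℝ) ∘ w = Hf f := rfl
          rw [this]
          exact (hHfspec f).1
        have := hli.cardinal_le_rank
        rwa [hmkO'] at this
    · constructor
      · exact subset_trans (hCsubB i) (hHfspec z).2
      · have hmem : ∀ j : ↥({i}ᶜ : Set O'), Hf z j.1 ∈ C i :=
          fun j => Submodule.subset_span ⟨j.1, j.2, rfl⟩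
        set w : ↥({i}ᶜ : Set O') → ↥(C i) := fun j => ⟨Hf z j.1, hmem j⟩ with hw
        have hli : LinearIndependent ℝ w := by
          apply LinearIndependent.of_comp (C i).subtype
          have h1 : ((C i).subtype : ↥(C i) → ℝ → ℝ) ∘ w = (Hf z) ∘ (Subtype.val) := rfl
          rw [h1]
          exact (hHfspec z).1.comp Subtype.val Subtype.val_injective
        have h2 := hli.cardinal_le_rank
        have h3 : #↥({i}ᶜ : Set O') = eContinuum := by
          rw [Cardinal.mk_compl_of_infinite, hmkO']
          rw [Cardinal.mk_singleton, hmkO']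
          exact lt_trans Cardinal.one_lt_aleph0 aleph0_lt_eContinuum
        rwa [h3] at h2
  · -- covering
    apply Set.eq_of_subset_of_subset
    · intro f hf
      have hfB : f ∈ (B ⟨f, hf⟩ : Set (ℝ → ℝ)) := Submodule.subset_span (Or.inl rfl)
      exact mem_biUnion (Or.inl ⟨⟨f, hf⟩, rfl⟩) hfB
    · intro f hf
      rw [mem_iUnion₂] at hf
      obtain ⟨B', hB', hfB'⟩ := hf
      rcases hB' with ⟨g, rfl⟩ | ⟨i, rfl⟩
      · exact (hHfspec g).2 hfB'
      · exact (hHfspec z).2 (hCsubB i hfB')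

/-- **Corollary.** The family `AC(ℝ)` of almost continuous functions has property
`B(e_𝔠, 𝔠)`: `AC(ℝ) ∪ {0}` is the union of at least `𝔠` many linear subspaces of `ℝ^ℝ`,
each contained in `AC(ℝ) ∪ {0}` and each of dimension at least `e_𝔠`. -/
theorem almostContinuous_property_B :
    ∃ 𝓑 : Set (Submodule ℝ (ℝ → ℝ)),
      Cardinal.continuum ≤ #𝓑 ∧
      (∀ B ∈ 𝓑, (B : Set (ℝ → ℝ)) ⊆ {f | IsAlmostContinuous f} ∪ {0} ∧
        eContinuum ≤ Module.rank ℝ B) ∧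
      {f | IsAlmostContinuous f} ∪ {0} = ⋃ B ∈ 𝓑, (B : Set (ℝ → ℝ)) := by
  exact almostContinuous_property_B'
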